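/- The distance Laplacian spectrum of the complete multipartite graph K_{t_1,...,t_k} on n = t_1 + ... + t_k vertices consists of: the eigenvalue n + t_i with multiplicity t_i - 1 for each i with t_i ≥ 2, the eigenvalue n with multiplicity k - 1, and the eigenvalue 0 with multiplicity 1. -/

import Mathlib

open Matrix

/-- The transmission of a vertex: sum of distances to all other vertices. -/
noncomputable def transmission {V : Type*} [Fintype V] (G : SimpleGraph V) (v : V) : ℕ :=
  ∑ u, G.dist v u

/-- The distance Laplacian matrix `D^L(G) = Diag(Tr) - D(G)`. -/
noncomputable def distLapMatrix {V : Type*} [Fintype V] [DecidableEq V]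
    (G : SimpleGraph V) : Matrix V V ℝ :=
  fun u v => if u = v then (transmission G u : ℝ) else -(G.dist u v : ℝ)

/-- `μ` is an eigenvalue of the real matrix `M`. -/
def IsEigenvalue {V : Type*} [Fintype V] [DecidableEq V] (M : Matrix V V ℝ) (μ : ℝ) : Prop :=
  Module.End.HasEigenvalue (Matrix.toLin' M) μ

/-- The multiplicity of `μ` as an eigenvalue of `M` (dimension of the eigenspace). -/
noncomputable def eigMult {V : Type*} [Fintype V] [DecidableEq V]
    (M : Matrix V V ℝ) (μ : ℝ) : ℕ :=
  Module.finrank ℝ (Module.End.eigenspace (Matrix.toLin' M) μ)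

open SimpleGraph

section
variable {k : ℕ} {t : Fin k → ℕ}

lemma cmp_adj (u v : Σ i, Fin (t i)) :
    (completeMultipartiteGraph fun i => Fin (t i)).Adj u v ↔ u.1 ≠ v.1 := by
  simp [completeMultipartiteGraph]

lemma cmp_dist (hk : 2 ≤ k) (ht : ∀ i, 1 ≤ t i) (u v : Σ i, Fin (t i)) :
    (completeMultipartiteGraph fun i => Fin (t i)).dist u v
      = if u = v then 0 else if u.1 = v.1 then 2 else 1 := by
  set G := completeMultipartiteGraph fun i => Fin (t i) with hG
  rcases eq_or_ne u v with rfl | huv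
  · simp
  rcases eq_or_ne u.1 v.1 with hp | hp
  · simp only [if_neg huv, if_pos hp]
    obtain ⟨j, hj⟩ : ∃ j : Fin k, j ≠ u.1 := by
      have : 1 < Fintype.card (Fin k) := by rw [Fintype.card_fin]; omega
      exact Fintype.exists_ne_of_one_lt_card this u.1
    set w : Σ i, Fin (t i) := ⟨j, ⟨0, ht j⟩⟩ with hw
    have h1 : G.Adj u w := by rw [cmp_adj]; simp only [hw]; exact fun h => hj h.symm
    have h2 : G.Adj w v := by rw [cmp_adj]; simp only [hw]; rw [← hp]; exact fun h => hj h
    have hle : G.dist u v ≤ 2 := by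
      have := G.dist_le ((h1.toWalk.append h2.toWalk))
      simpa using this
    have hpos : 0 < G.dist u v :=
      ((h1.toWalk.append h2.toWalk).reachable).pos_dist_of_ne huv
    have hne1 : G.dist u v ≠ 1 := fun h =>
      absurd hp (cmp_adj u v |>.mp (SimpleGraph.dist_eq_one_iff_adj.mp h))
    omega
  · rw [if_neg huv, if_neg hp]
    exact SimpleGraph.dist_eq_one_iff_adj.mpr ((cmp_adj u v).mpr hp)

end

section
open Finset
variable {k n : ℕ} {t : Fin k → ℕ}

/-- sum of `x` over part `i`. -/
def Pp (t : Fin k → ℕ) (i : Fin k) (x : (Σ i, Fin (t i)) → ℝ) : ℝ := ∑ b, x ⟨i, b⟩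

/-- total sum of `x`. -/
def Sx (t : Fin k → ℕ) (x : (Σ i, Fin (t i)) → ℝ) : ℝ := ∑ v, x v

lemma sum_sigma_eq (f : (Σ i, Fin (t i)) → ℝ) : ∑ v, f v = ∑ j, ∑ b, f ⟨j, b⟩ :=
  Finset.sum_sigma Finset.univ (fun _ => Finset.univ) f

lemma transmission_eq (hk : 2 ≤ k) (ht : ∀ i, 1 ≤ t i) (hn : n = ∑ i, t i)
    (u : Σ i, Fin (t i)) :
    ((transmission (SimpleGraph.completeMultipartiteGraph fun i => Fin (t i)) u : ℝ)) 
      = (n : ℝ) + t u.1 - 2 := by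
  have hd : ∀ v : Σ i, Fin (t i),
      (((SimpleGraph.completeMultipartiteGraph fun i => Fin (t i)).dist u v : ℝ))
        = 1 + (if u.1 = v.1 then 1 else 0) - 2 * (if u = v then 1 else 0) := by
    intro v
    rw [cmp_dist hk ht]
    rcases eq_or_ne u v with rfl | huv
    · simp; norm_num
    · rcases eq_or_ne u.1 v.1 with hp | hp <;> simp [huv, hp] <;> norm_num
  rw [transmission, Nat.cast_sum]
  simp only [hd]
  rw [Finset.sum_sub_distrib, Finset.sum_add_distrib]
  have h1 : ∑ v : (Σ i, Fin (t i)), (1 : ℝ) = n := by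
    rw [Finset.sum_const, hn]; simp [Fintype.card_sigma]
  have h2 : ∑ v : (Σ i, Fin (t i)), (if u.1 = v.1 then (1:ℝ) else 0) = t u.1 := by
    rw [sum_sigma_eq (fun v => if u.1 = v.1 then (1:ℝ) else 0)]
    have : ∀ j, ∑ b : Fin (t j), (if u.1 = j then (1:ℝ) else 0)
        = if u.1 = j then (t j : ℝ) else 0 := by
      intro j; rcases eq_or_ne u.1 j with h | h <;> simp [h]
    simp only [this]
    simp
  have h3 : ∑ v : (Σ i, Fin (t i)), 2 * (if u = v then (1:ℝ) else 0) = 2 := by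
    rw [← Finset.mul_sum, Finset.sum_ite_eq]; simp
  rw [h1, h2, h3]

lemma M_apply (hk : 2 ≤ k) (ht : ∀ i, 1 ≤ t i) (hn : n = ∑ i, t i)
    (u v : Σ i, Fin (t i)) :
    distLapMatrix (SimpleGraph.completeMultipartiteGraph fun i => Fin (t i)) u v
      = (if u = v then (n : ℝ) + t u.1 else 0) - (if u.1 = v.1 then 1 else 0) - 1 := by
  rw [distLapMatrix]
  rcases eq_or_ne u v with rfl | huv
  · simp [transmission_eq hk ht hn]; ring
  · rw [if_neg huv, if_neg huv, cmp_dist hk ht, if_neg huv]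
    rcases eq_or_ne u.1 v.1 with hp | hp <;> simp [hp] <;> norm_num

lemma mulVec_eq (hk : 2 ≤ k) (ht : ∀ i, 1 ≤ t i) (hn : n = ∑ i, t i)
    (x : (Σ i, Fin (t i)) → ℝ) (u : Σ i, Fin (t i)) :
    ((distLapMatrix (SimpleGraph.completeMultipartiteGraph fun i => Fin (t i))) *ᵥ x) u
      = ((n : ℝ) + t u.1) * x u - Pp t u.1 x - Sx t x := by
  have : ∀ v, distLapMatrix (SimpleGraph.completeMultipartiteGraph fun i => Fin (t i)) u v * x v
      = (if u = v then ((n : ℝ) + t u.1) * x v else 0)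
        - (if u.1 = v.1 then x v else 0) - x v := by
    intro v
    rw [M_apply hk ht hn]
    rcases eq_or_ne u v with rfl | huv
    · simp; ring
    · rcases eq_or_ne u.1 v.1 with hp | hp <;> simp [huv, hp] <;> ring
  rw [Matrix.mulVec, dotProduct]
  simp only [this]
  rw [Finset.sum_sub_distrib, Finset.sum_sub_distrib, Finset.sum_ite_eq, if_pos (Finset.mem_univ u)]
  have h2 : ∑ v : (Σ i, Fin (t i)), (if u.1 = v.1 then x v else 0) = Pp t u.1 x := by
    rw [sum_sigma_eq (fun v => if u.1 = v.1 then x v else 0), Pp]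
    have : ∀ j, ∑ b : Fin (t j), (if u.1 = j then x ⟨j, b⟩ else 0)
        = if u.1 = j then ∑ b, x ⟨j, b⟩ else 0 := by
      intro j; rcases eq_or_ne u.1 j with h | h <;> simp [h]
    simp only [this, Finset.sum_ite_eq, if_pos (Finset.mem_univ u.1)]
  rw [h2]
  rfl

end

section
open Finset Module
variable {k n : ℕ} {t : Fin k → ℕ}

lemma mem_eig (hk : 2 ≤ k) (ht : ∀ i, 1 ≤ t i) (hn : n = ∑ i, t i)
    (x : (Σ i, Fin (t i)) → ℝ) (μ : ℝ) :
    x ∈ Module.End.eigenspace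
      (Matrix.toLin' (distLapMatrix (SimpleGraph.completeMultipartiteGraph fun i => Fin (t i)))) μ
      ↔ ∀ u : Σ i, Fin (t i), ((n : ℝ) + t u.1 - μ) * x u = Pp t u.1 x + Sx t x := by
  rw [Module.End.mem_eigenspace_iff, Matrix.toLin'_apply, funext_iff]
  refine forall_congr' fun u => ?_
  rw [mulVec_eq hk ht hn, Pi.smul_apply, smul_eq_mul]
  constructor <;> intro h <;> nlinarith [h]

lemma Sx_eq_sum_Pp (x : (Σ i, Fin (t i)) → ℝ) : Sx t x = ∑ i, Pp t i x :=
  sum_sigma_eq x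

lemma Pp_const (i : Fin k) (x : (Σ i, Fin (t i)) → ℝ) (c : ℝ) (h : ∀ b, x ⟨i, b⟩ = c) :
    Pp t i x = t i * c := by
  rw [Pp]
  simp [h, mul_comm]

/-- the base vertex of part `i`. -/
def zz (t : Fin k → ℕ) (ht : ∀ i, 1 ≤ t i) (i : Fin k) : Σ i, Fin (t i) := ⟨i, ⟨0, ht i⟩⟩

lemma npos (hk : 2 ≤ k) (ht : ∀ i, 1 ≤ t i) (hn : n = ∑ i, t i) : 0 < n := by
  subst hn
  calc 0 < k := by omega
  _ = ∑ i : Fin k, 1 := by simp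
  _ ≤ ∑ i, t i := Finset.sum_le_sum fun i _ => ht i

lemma coeff_pos (hk : 2 ≤ k) (ht : ∀ i, 1 ≤ t i) (hn : n = ∑ i, t i) (i : Fin k) :
    (0:ℝ) < (n : ℝ) + t i := by
  have := npos hk ht hn
  have := ht i
  positivity

lemma eig_zero_iff (hk : 2 ≤ k) (ht : ∀ i, 1 ≤ t i) (hn : n = ∑ i, t i)
    (x : (Σ i, Fin (t i)) → ℝ) :
    x ∈ Module.End.eigenspace
      (Matrix.toLin' (distLapMatrix (SimpleGraph.completeMultipartiteGraph fun i => Fin (t i)))) (0:ℝ)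
      ↔ ∀ v : Σ i, Fin (t i), x v = x (zz t ht ⟨0, by omega⟩) := by
  rw [mem_eig hk ht hn]
  have hn0 : (n:ℝ) ≠ 0 := Nat.cast_ne_zero.mpr (npos hk ht hn).ne'
  constructor
  · intro h
    have hpart : ∀ (i : Fin k) (a : Fin (t i)), x ⟨i, a⟩ = x (zz t ht i) := by
      intro i a
      have h1 := h ⟨i, a⟩
      have h2 := h (zz t ht i)
      have hne : ((n : ℝ) + t i) ≠ 0 := (coeff_pos hk ht hn i).ne'
      simp only [zz] at h2 ⊢
      have : ((n : ℝ) + t i - 0) ≠ 0 := by simpa using hne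
      field_simp at h1 h2
      exact mul_left_cancel₀ hne (by rw [sub_zero] at h1 h2; rw [h1, h2])
    have hglob : ∀ i, (n:ℝ) * x (zz t ht i) = Sx t x := by
      intro i
      have h2 := h (zz t ht i)
      have hPp : Pp t i x = t i * x (zz t ht i) := Pp_const i x _ (fun b => hpart i b)
      simp only [zz] at h2 hPp ⊢
      rw [hPp] at h2
      linarith
    intro v
    have hv : x v = x (zz t ht v.1) := by
      have := hpart v.1 v.2
      simpa using this
    rw [hv]
    exact mul_left_cancel₀ hn0 (by rw [hglob v.1, hglob ⟨0, by omega⟩])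
  · intro h u
    set c := x (zz t ht ⟨0, by omega⟩) with hc
    have hconst : ∀ v : Σ i, Fin (t i), x v = c := h
    have hPp : ∀ i, Pp t i x = t i * c := fun i => Pp_const i x c (fun b => hconst ⟨i, b⟩)
    have hSx : Sx t x = n * c := by
      rw [Sx_eq_sum_Pp]
      simp only [hPp]
      rw [← Finset.sum_mul, hn]
      push_cast
      ring
    rw [hPp, hSx, hconst u]
    ring

end

section
open Finset Module
variable {k n : ℕ} {t : Fin k → ℕ}

lemma finrank_ker_eq {A : Type*} [Fintype A] {B : Type*} [AddCommGroup B] [Module ℝ B]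
    [Module.Finite ℝ B] (L : (A → ℝ) →ₗ[ℝ] B) (hs : Function.Surjective L) :
    Module.finrank ℝ (LinearMap.ker L) = Fintype.card A - Module.finrank ℝ B := by
  have h := LinearMap.finrank_range_add_finrank_ker L
  rw [LinearMap.range_eq_top.mpr hs, finrank_top, Module.finrank_pi] at h
  omega

/-- difference-with-basepoint map -/
def diffMap {W : Type*} [DecidableEq W] (v0 : W) :
    (W → ℝ) →ₗ[ℝ] ({v : W // v ≠ v0} → ℝ) where
  toFun x := fun v => x v.1 - x v0
  map_add' x y := by funext v; simp; ring
  map_smul' c x := by funext v; simp; ring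

lemma diffMap_surj {W : Type*} [DecidableEq W] (v0 : W) :
    Function.Surjective (diffMap v0) := by
  intro y
  refine ⟨fun w => if h : w = v0 then 0 else y ⟨w, h⟩, ?_⟩
  funext v
  simp [diffMap, v.2]

lemma mem_ker_diffMap {W : Type*} [DecidableEq W] (v0 : W) (x : W → ℝ) :
    x ∈ LinearMap.ker (diffMap v0) ↔ ∀ v, x v = x v0 := by
  simp only [LinearMap.mem_ker, diffMap, LinearMap.coe_mk, AddHom.coe_mk, funext_iff,
    Pi.zero_apply, sub_eq_zero]
  constructor
  · intro h v
    by_cases hv : v = v0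
    · rw [hv]
    · exact h ⟨v, hv⟩
  · intro h v
    exact h v.1

lemma cardV (hn : n = ∑ i, t i) : Fintype.card (Σ i, Fin (t i)) = n := by
  rw [hn]; simp

lemma n_ge_k (ht : ∀ i, 1 ≤ t i) (hn : n = ∑ i, t i) : k ≤ n := by
  subst hn
  calc k = ∑ i : Fin k, 1 := by simp
  _ ≤ ∑ i, t i := Finset.sum_le_sum fun i _ => ht i

lemma eigMult_zero (hk : 2 ≤ k) (ht : ∀ i, 1 ≤ t i) (hn : n = ∑ i, t i) :
    eigMult (distLapMatrix (SimpleGraph.completeMultipartiteGraph fun i => Fin (t i))) (0:ℝ)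
      = 1 := by
  rw [eigMult]
  have hEq : Module.End.eigenspace
      (Matrix.toLin' (distLapMatrix (SimpleGraph.completeMultipartiteGraph fun i => Fin (t i)))) (0:ℝ)
      = LinearMap.ker (diffMap (zz t ht ⟨0, by omega⟩)) :=
    Submodule.ext fun x => (eig_zero_iff hk ht hn x).trans (mem_ker_diffMap _ x).symm
  rw [hEq, finrank_ker_eq _ (diffMap_surj _), Module.finrank_pi]
  have h1 : Fintype.card {v : Σ i, Fin (t i) // v ≠ zz t ht ⟨0, by omega⟩}
      = Fintype.card (Σ i, Fin (t i)) - 1 := by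
    simp only [ne_eq]
    rw [Fintype.card_subtype_compl, Fintype.card_subtype_eq]
  rw [h1, cardV hn]
  have := n_ge_k ht hn
  omega

end

section
open Finset Module
variable {k n : ℕ} {t : Fin k → ℕ}

lemma Sx_const (hn : n = ∑ i, t i) (c : ℝ) : Sx t (fun _ : (Σ i, Fin (t i)) => c) = n * c := by
  rw [Sx, Finset.sum_const, Finset.card_univ, cardV hn]
  simp [nsmul_eq_mul]

lemma eig_n_iff (hk : 2 ≤ k) (ht : ∀ i, 1 ≤ t i) (hn : n = ∑ i, t i)
    (x : (Σ i, Fin (t i)) → ℝ) :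
    x ∈ Module.End.eigenspace
      (Matrix.toLin' (distLapMatrix (SimpleGraph.completeMultipartiteGraph fun i => Fin (t i)))) ((n:ℝ))
      ↔ (∀ v : Σ i, Fin (t i), x v = x (zz t ht v.1)) ∧ Sx t x = 0 := by
  rw [mem_eig hk ht hn]
  have hco : ∀ u : Σ i, Fin (t i), ((n : ℝ) + t u.1 - n) = t u.1 := by intro u; ring
  constructor
  · intro h
    have hpart : ∀ (i : Fin k) (a : Fin (t i)), x ⟨i, a⟩ = x (zz t ht i) := by
      intro i a
      have h1 := h ⟨i, a⟩
      have h2 := h (zz t ht i)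
      rw [hco] at h1 h2
      have hne : ((t i : ℝ)) ≠ 0 := by
        have := ht i; positivity
      simp only [zz] at h2 ⊢
      exact mul_left_cancel₀ hne (by rw [h1, h2])
    have hS : Sx t x = 0 := by
      have h2 := h (zz t ht ⟨0, by omega⟩)
      rw [hco] at h2
      have hPp : Pp t ⟨0, by omega⟩ x = t ⟨0, by omega⟩ * x (zz t ht ⟨0, by omega⟩) :=
        Pp_const _ x _ (fun b => hpart _ b)
      simp only [zz] at h2 hPp
      rw [hPp] at h2
      linarith
    exact ⟨fun v => by have := hpart v.1 v.2; simpa using this, hS⟩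
  · rintro ⟨hconst, hS⟩ u
    have hPp : Pp t u.1 x = t u.1 * x (zz t ht u.1) :=
      Pp_const _ x _ (fun b => hconst ⟨u.1, b⟩)
    rw [hco, hPp, hS, hconst u]
    ring

lemma card_fin_ne_zero (m : ℕ) (hm : 1 ≤ m) :
    Fintype.card {a : Fin m // (a : ℕ) ≠ 0} = m - 1 := by
  have e : {a : Fin m // (a : ℕ) ≠ 0} ≃ {a : Fin m // a ≠ ⟨0, hm⟩} :=
    Equiv.subtypeEquivRight (by intro a; simp [Fin.ext_iff])
  rw [Fintype.card_congr e]
  simp only [ne_eq]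
  rw [Fintype.card_subtype_compl, Fintype.card_subtype_eq, Fintype.card_fin]

/-- the second component map `Sx` as a linear map. -/
def SxL (t : Fin k → ℕ) : ((Σ i, Fin (t i)) → ℝ) →ₗ[ℝ] ℝ where
  toFun x := Sx t x
  map_add' x y := by simp [Sx, Finset.sum_add_distrib]
  map_smul' c x := by simp [Sx, Finset.mul_sum]

/-- the within-part difference map. -/
def diffPartMap (t : Fin k → ℕ) (ht : ∀ i, 1 ≤ t i) :
    ((Σ i, Fin (t i)) → ℝ) →ₗ[ℝ] ((Σ i : Fin k, {a : Fin (t i) // (a : ℕ) ≠ 0}) → ℝ) where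
  toFun x := fun w => x ⟨w.1, w.2.1⟩ - x (zz t ht w.1)
  map_add' x y := by funext w; simp; ring
  map_smul' c x := by funext w; simp; ring

lemma Ln_surj (t : Fin k → ℕ) (hk : 2 ≤ k) (ht : ∀ i, 1 ≤ t i) (hn : n = ∑ i, t i) :
    Function.Surjective ((diffPartMap t ht).prod (SxL t)) := by
  rw [← LinearMap.range_eq_top, eq_top_iff]
  rintro ⟨y, r⟩ -
  have hnR : (n : ℝ) ≠ 0 := Nat.cast_ne_zero.mpr (npos hk ht hn).ne'
  -- constant functions hit (0, any)
  have hconst : ∀ c : ℝ, ((diffPartMap t ht).prod (SxL t)) (fun _ => c) = (0, (n:ℝ) * c) := by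
    intro c
    refine Prod.ext ?_ ?_
    · funext w; simp [diffPartMap, LinearMap.prod_apply]
    · simp [LinearMap.prod_apply, SxL, Sx_const hn]; exact Sx_const hn c
  -- a function with prescribed differences
  set x0 : (Σ i, Fin (t i)) → ℝ :=
    fun v => if h : (v.2 : ℕ) = 0 then 0 else y ⟨v.1, ⟨v.2, h⟩⟩ with hx0
  have hx0diff : diffPartMap t ht x0 = y := by
    funext w
    simp only [diffPartMap, LinearMap.coe_mk, AddHom.coe_mk, hx0, zz]
    rw [dif_neg w.2.2]
    simp
  set s : ℝ := SxL t x0 with hs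
  have h1 : ((diffPartMap t ht).prod (SxL t)) x0 = (y, s) := by
    refine Prod.ext ?_ ?_
    · simpa [LinearMap.prod_apply] using hx0diff
    · simp [LinearMap.prod_apply]; exact hs.symm
  have h2 : (⟨y, r⟩ : _ × ℝ) = ((diffPartMap t ht).prod (SxL t)) x0
      + ((diffPartMap t ht).prod (SxL t)) (fun _ => (r - s) / n) := by
    rw [h1, hconst]
    refine Prod.ext ?_ ?_
    · simp
    · simp
      field_simp
      ring
  rw [h2]
  exact Submodule.add_mem _ (LinearMap.mem_range_self _ _) (LinearMap.mem_range_self _ _)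

lemma sum_pred (ht : ∀ i, 1 ≤ t i) (hn : n = ∑ i, t i) : (∑ i, (t i - 1)) + k = n := by
  have h : ∑ i, (t i - 1 + 1) = ∑ i, t i :=
    Finset.sum_congr rfl fun i _ => by have := ht i; omega
  rw [Finset.sum_add_distrib] at h
  simp only [Finset.sum_const, smul_eq_mul, mul_one, Finset.card_univ, Fintype.card_fin] at h
  omega

lemma eigMult_n (hk : 2 ≤ k) (ht : ∀ i, 1 ≤ t i) (hn : n = ∑ i, t i) :
    eigMult (distLapMatrix (SimpleGraph.completeMultipartiteGraph fun i => Fin (t i))) ((n:ℝ))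
      = k - 1 := by
  rw [eigMult]
  have hker : ∀ x, x ∈ LinearMap.ker ((diffPartMap t ht).prod (SxL t))
      ↔ (∀ v : Σ i, Fin (t i), x v = x (zz t ht v.1)) ∧ Sx t x = 0 := by
    intro x
    rw [LinearMap.mem_ker, LinearMap.prod_apply, Prod.mk.injEq]  -- careful
    constructor
    · rintro ⟨hd, hS⟩
      refine ⟨fun v => ?_, hS⟩
      by_cases hv : (v.2 : ℕ) = 0
      · have : v = zz t ht v.1 := by
          rw [zz]
          refine Sigma.ext rfl ?_
          simp [Fin.ext_iff, hv]
        rw [← this]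
      · have := congrFun hd ⟨v.1, ⟨v.2, hv⟩⟩
        simp only [diffPartMap, LinearMap.coe_mk, AddHom.coe_mk, Pi.zero_apply] at this
        have h2 : x ⟨v.1, v.2⟩ - x (zz t ht v.1) = 0 := by simpa using this
        have h3 : x v - x (zz t ht v.1) = 0 := by simpa using h2
        linarith
    · rintro ⟨hc, hS⟩
      refine ⟨funext fun w => ?_, hS⟩
      have h4 : x ⟨w.1, w.2.1⟩ = x (zz t ht w.1) := hc ⟨w.1, w.2.1⟩
      simp [diffPartMap, h4]
  have hEq : Module.End.eigenspace
      (Matrix.toLin' (distLapMatrix (SimpleGraph.completeMultipartiteGraph fun i => Fin (t i)))) ((n:ℝ))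
      = LinearMap.ker ((diffPartMap t ht).prod (SxL t)) :=
    Submodule.ext fun x => (eig_n_iff hk ht hn x).trans (hker x).symm
  rw [hEq, finrank_ker_eq _ (Ln_surj t hk ht hn)]
  rw [Module.finrank_prod, Module.finrank_pi, Module.finrank_self]
  have hcard : Fintype.card (Σ i : Fin k, {a : Fin (t i) // (a : ℕ) ≠ 0}) = n - k := by
    rw [Fintype.card_sigma]
    have : ∀ i, Fintype.card {a : Fin (t i) // (a : ℕ) ≠ 0} = t i - 1 :=
      fun i => card_fin_ne_zero _ (ht i)
    simp only [this]
    have := sum_pred ht hn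
    omega
  rw [hcard, cardV hn]
  have := n_ge_k ht hn
  omega

end

section
open Finset Module
variable {k n : ℕ} {t : Fin k → ℕ}

lemma eig_ns_iff (hk : 2 ≤ k) (ht : ∀ i, 1 ≤ t i) (hn : n = ∑ i, t i)
    (s : ℝ) (hs : 0 < s) (x : (Σ i, Fin (t i)) → ℝ) :
    x ∈ Module.End.eigenspace
      (Matrix.toLin' (distLapMatrix (SimpleGraph.completeMultipartiteGraph fun i => Fin (t i)))) ((n:ℝ) + s)
      ↔ ((∀ v : Σ i, Fin (t i), (t v.1 : ℝ) ≠ s → x v = 0) ∧ ∀ i, Pp t i x = 0) := by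
  classical
  rw [mem_eig hk ht hn]
  have hco : ∀ u : Σ i, Fin (t i), ((n:ℝ) + t u.1 - ((n:ℝ) + s)) = (t u.1 : ℝ) - s :=
    fun u => by ring
  constructor
  · intro h
    set S := Sx t x with hSdef
    have hconst : ∀ i : Fin k, (t i : ℝ) ≠ s → ∀ a, x ⟨i, a⟩ = x (zz t ht i) := by
      intro i hi a
      have h1 := h ⟨i, a⟩
      have h2 := h (zz t ht i)
      rw [hco] at h1 h2
      have hne : ((t i : ℝ) - s) ≠ 0 := sub_ne_zero.mpr hi
      simp only [zz] at h2 ⊢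
      exact mul_left_cancel₀ hne (by rw [h1, h2])
    have hc : ∀ i : Fin k, (t i : ℝ) ≠ s → (-s) * x (zz t ht i) = S := by
      intro i hi
      have h2 := h (zz t ht i)
      rw [hco] at h2
      have hPp : Pp t i x = t i * x (zz t ht i) := Pp_const _ x _ (hconst i hi)
      simp only [zz] at h2 hPp ⊢
      rw [hPp] at h2
      linarith
    have hPeq : ∀ i : Fin k, (t i : ℝ) = s → Pp t i x = -S := by
      intro i hi
      have h2 := h (zz t ht i)
      rw [hco] at h2
      simp only [zz] at h2
      rw [hi] at h2
      simp at h2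
      linarith
    -- show S = 0
    set F : Finset (Fin k) := Finset.univ.filter (fun i => (t i : ℝ) = s) with hF
    have hsplit : S = (∑ i ∈ F, Pp t i x) + ∑ i ∈ Fᶜ, Pp t i x := by
      rw [hSdef, Sx_eq_sum_Pp, ← Finset.sum_add_sum_compl F]
    have hFsum : ∑ i ∈ F, Pp t i x = (F.card : ℝ) * (-S) := by
      rw [Finset.sum_congr rfl (fun i hi => hPeq i (by simpa [hF] using hi)),
        Finset.sum_const, nsmul_eq_mul]
    have hFcsum : ∑ i ∈ Fᶜ, Pp t i x = (∑ i ∈ Fᶜ, (t i : ℝ)) * (-S / s) := by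
      rw [Finset.sum_mul]
      refine Finset.sum_congr rfl (fun i hi => ?_)
      have hi' : (t i : ℝ) ≠ s := by
        simp only [hF, Finset.mem_compl, Finset.mem_filter, Finset.mem_univ, true_and] at hi
        exact hi
      have hx := hc i hi'
      have hPp : Pp t i x = t i * x (zz t ht i) := Pp_const _ x _ (hconst i hi')
      rw [hPp]
      have : x (zz t ht i) = -S / s := by
        field_simp
        linarith
      rw [this]
    have hT : (0:ℝ) ≤ ∑ i ∈ Fᶜ, (t i : ℝ) :=
      Finset.sum_nonneg fun i _ => by positivity
    have hS0 : S = 0 := by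
      set m : ℝ := (F.card : ℝ) with hm
      set T : ℝ := ∑ i ∈ Fᶜ, (t i : ℝ) with hTdef
      have hmnn : (0:ℝ) ≤ m := by exact Nat.cast_nonneg _
      have key : S * (s + m * s + T) = 0 := by
        have := hsplit
        rw [hFsum, hFcsum] at this
        field_simp at this
        nlinarith [this]
      have hpos : 0 < s + m * s + T := by nlinarith
      exact (mul_eq_zero.mp key).resolve_right hpos.ne'
    constructor
    · intro v hv
      have := hc v.1 hv
      rw [hS0] at this
      have hx0 : x (zz t ht v.1) = 0 :=
        (mul_eq_zero.mp this).resolve_left (neg_ne_zero.mpr hs.ne')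
      have := hconst v.1 hv v.2
      simp only [Sigma.eta] at this
      rw [this, hx0]
    · intro i
      by_cases hi : (t i : ℝ) = s
      · rw [hPeq i hi, hS0, neg_zero]
      · have hPp : Pp t i x = t i * x (zz t ht i) := Pp_const _ x _ (hconst i hi)
        have := hc i hi
        rw [hS0] at this
        have hx0 : x (zz t ht i) = 0 :=
          (mul_eq_zero.mp this).resolve_left (neg_ne_zero.mpr hs.ne')
        rw [hPp, hx0, mul_zero]
  · rintro ⟨h0, hP⟩ u
    have hS0 : Sx t x = 0 := by rw [Sx_eq_sum_Pp]; simp [hP]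
    rw [hco, hS0, hP u.1, add_zero]
    by_cases hu : (t u.1 : ℝ) = s
    · rw [hu, sub_self, zero_mul]
    · rw [h0 u hu, mul_zero]

end

section
open Finset Module
variable {k n : ℕ} {t : Fin k → ℕ}

/-- part sums over parts of size `s`, as a linear map. -/
def PpGood (t : Fin k → ℕ) (s : ℕ) :
    ((Σ i, Fin (t i)) → ℝ) →ₗ[ℝ] ({i : Fin k // t i = s} → ℝ) where
  toFun x := fun i => Pp t i.1 x
  map_add' x y := by funext i; simp [Pp, Finset.sum_add_distrib]
  map_smul' c x := by funext i; simp [Pp, Finset.mul_sum]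

/-- restriction to parts of size `≠ s`, as a linear map. -/
def restBad (t : Fin k → ℕ) (s : ℕ) :
    ((Σ i, Fin (t i)) → ℝ) →ₗ[ℝ] ((Σ j : {i : Fin k // t i ≠ s}, Fin (t j.1)) → ℝ) where
  toFun x := fun w => x ⟨w.1.1, w.2⟩
  map_add' x y := rfl
  map_smul' c x := rfl

lemma mem_ker_LS (s : ℕ) (x : (Σ i, Fin (t i)) → ℝ) :
    x ∈ LinearMap.ker ((PpGood t s).prod (restBad t s))
      ↔ ((∀ v : Σ i, Fin (t i), (t v.1 : ℝ) ≠ (s:ℝ) → x v = 0) ∧ ∀ i, Pp t i x = 0) := by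
  rw [LinearMap.mem_ker, LinearMap.prod_apply, Prod.mk.injEq]
  constructor
  · rintro ⟨hg, hb⟩
    have hbad : ∀ v : Σ i, Fin (t i), t v.1 ≠ s → x v = 0 := by
      intro v hv
      have := congrFun hb ⟨⟨v.1, hv⟩, v.2⟩
      simpa [restBad] using this
    refine ⟨fun v hv => hbad v (fun h => hv (by rw [h])), fun i => ?_⟩
    by_cases hi : t i = s
    · have := congrFun hg ⟨i, hi⟩
      simpa [PpGood] using this
    · exact Finset.sum_eq_zero fun b _ => hbad ⟨i, b⟩ hi
  · rintro ⟨h0, hP⟩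
    constructor
    · funext i
      simpa [PpGood] using hP i.1
    · funext w
      have : (t w.1.1 : ℝ) ≠ (s : ℝ) := by exact_mod_cast w.1.2
      simpa [restBad] using h0 ⟨w.1.1, w.2⟩ this

lemma LS_surj (ht : ∀ i, 1 ≤ t i) (s : ℕ) :
    Function.Surjective ((PpGood t s).prod (restBad t s)) := by
  rintro ⟨c, y⟩
  set xd : (Σ i, Fin (t i)) → ℝ :=
    fun v => if h : t v.1 = s then c ⟨v.1, h⟩ / (t v.1 : ℝ) else y ⟨⟨v.1, h⟩, v.2⟩ with hxd
  refine ⟨xd, ?_⟩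
  have hval : ∀ (i : Fin k) (h : t i = s) (b : Fin (t i)), xd ⟨i, b⟩ = c ⟨i, h⟩ / (t i : ℝ) := by
    intro i h b
    simp only [hxd]
    rw [dif_pos h]
  have h1 : PpGood t s xd = c := by
    funext i
    have hP : Pp t i.1 xd = (t i.1 : ℝ) * (c i / (t i.1 : ℝ)) :=
      Pp_const _ _ _ (fun b => hval i.1 i.2 b)
    have htne : ((t i.1 : ℝ)) ≠ 0 := by
      have := ht i.1
      positivity
    simp only [PpGood, LinearMap.coe_mk, AddHom.coe_mk]
    rw [hP]
    field_simp
  have h2 : restBad t s xd = y := by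
    funext w
    simp only [restBad, LinearMap.coe_mk, AddHom.coe_mk, hxd]
    rw [dif_neg w.1.2]
  exact Prod.ext h1 h2

lemma sum_filter_pred (ht : ∀ i, 1 ≤ t i) (s : ℕ) :
    (∑ i ∈ Finset.univ.filter (fun i => t i = s), (t i - 1))
      + (Finset.univ.filter (fun i => t i = s)).card
      = ∑ i ∈ Finset.univ.filter (fun i => t i = s), t i := by
  rw [Finset.card_eq_sum_ones, ← Finset.sum_add_distrib]
  exact Finset.sum_congr rfl fun i _ => by have := ht i; omega

lemma eigMult_ns (hk : 2 ≤ k) (ht : ∀ i, 1 ≤ t i) (hn : n = ∑ i, t i) (s : ℕ) (hs : 2 ≤ s) :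
    eigMult (distLapMatrix (SimpleGraph.completeMultipartiteGraph fun i => Fin (t i)))
        ((n:ℝ) + (s:ℝ))
      = ∑ i ∈ Finset.univ.filter (fun i => t i = s), (t i - 1) := by
  classical
  rw [eigMult]
  have hspos : (0:ℝ) < (s:ℝ) := by
    have : 0 < s := by omega
    exact_mod_cast this
  have hEq : Module.End.eigenspace
      (Matrix.toLin' (distLapMatrix (SimpleGraph.completeMultipartiteGraph fun i => Fin (t i))))
        ((n:ℝ) + (s:ℝ))
      = LinearMap.ker ((PpGood t s).prod (restBad t s)) :=
    Submodule.ext fun x => (eig_ns_iff hk ht hn (s:ℝ) hspos x).trans (mem_ker_LS s x).symm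
  rw [hEq, finrank_ker_eq _ (LS_surj ht s), Module.finrank_prod, Module.finrank_pi,
    Module.finrank_pi, cardV hn]
  have hc1 : Fintype.card {i : Fin k // t i = s}
      = (Finset.univ.filter (fun i => t i = s)).card := Fintype.card_subtype _
  have hc2 : Fintype.card (Σ j : {i : Fin k // t i ≠ s}, Fin (t j.1))
      = ∑ i ∈ Finset.univ.filter (fun i => ¬ t i = s), t i := by
    rw [Fintype.card_sigma]
    simp only [Fintype.card_fin]
    exact (Finset.sum_subtype _ (by simp) t).symm
  rw [hc1, hc2]
  have hsplit : (∑ i ∈ Finset.univ.filter (fun i => t i = s), t i)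
      + (∑ i ∈ Finset.univ.filter (fun i => ¬ t i = s), t i) = n := by
    rw [hn]
    exact Finset.sum_filter_add_sum_filter_not _ _ _
  have h3 := sum_filter_pred ht s
  omega

lemma eig_other (hk : 2 ≤ k) (ht : ∀ i, 1 ≤ t i) (hn : n = ∑ i, t i) (μ : ℝ)
    (hμ0 : μ ≠ 0) (hμn : μ ≠ (n:ℝ)) (hμt : ∀ i, μ ≠ (n:ℝ) + t i)
    (x : (Σ i, Fin (t i)) → ℝ)
    (hx : x ∈ Module.End.eigenspace
      (Matrix.toLin' (distLapMatrix (SimpleGraph.completeMultipartiteGraph fun i => Fin (t i)))) μ) :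
    x = 0 := by
  rw [mem_eig hk ht hn] at hx
  have hco : ∀ i : Fin k, ((n:ℝ) + t i - μ) ≠ 0 :=
    fun i => sub_ne_zero.mpr (fun h => hμt i h.symm)
  have hconst : ∀ (i : Fin k) (a : Fin (t i)), x ⟨i, a⟩ = x (zz t ht i) := by
    intro i a
    have h1 := hx ⟨i, a⟩
    have h2 := hx (zz t ht i)
    simp only [zz] at h2 ⊢
    exact mul_left_cancel₀ (hco i) (by rw [h1, h2])
  have hPp : ∀ i, Pp t i x = t i * x (zz t ht i) :=
    fun i => Pp_const _ x _ (hconst i)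
  have heq : ∀ i, ((n:ℝ) - μ) * x (zz t ht i) = Sx t x := by
    intro i
    have h2 := hx (zz t ht i)
    simp only [zz] at h2 ⊢
    have hPp' := hPp i
    simp only [zz] at hPp'
    rw [hPp'] at h2
    nlinarith [h2]
  have hSsum : Sx t x = ∑ i, (t i : ℝ) * x (zz t ht i) := by
    rw [Sx_eq_sum_Pp]
    exact Finset.sum_congr rfl fun i _ => hPp i
  have hkey : ((n:ℝ) - μ) * Sx t x = (n:ℝ) * Sx t x := by
    calc ((n:ℝ) - μ) * Sx t x = ∑ i, (t i : ℝ) * (((n:ℝ) - μ) * x (zz t ht i)) := by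
          rw [hSsum, Finset.mul_sum]
          exact Finset.sum_congr rfl fun i _ => by ring
    _ = ∑ i, (t i : ℝ) * Sx t x := Finset.sum_congr rfl fun i _ => by rw [heq i]
    _ = (∑ i, (t i : ℝ)) * Sx t x := by rw [Finset.sum_mul]
    _ = (n:ℝ) * Sx t x := by
          congr 1
          rw [hn]
          push_cast
          ring
  have hS0 : Sx t x = 0 := by
    have hmul : μ * Sx t x = 0 := by nlinarith [hkey]
    exact (mul_eq_zero.mp hmul).resolve_left hμ0
  have hz : ∀ i, x (zz t ht i) = 0 := by
    intro i
    have := heq i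
    rw [hS0] at this
    exact (mul_eq_zero.mp this).resolve_left (sub_ne_zero.mpr (Ne.symm hμn))
  funext v
  have := hconst v.1 v.2
  simp only [Sigma.eta] at this
  rw [Pi.zero_apply, this, hz v.1]

lemma eig_n1 (hk : 2 ≤ k) (ht : ∀ i, 1 ≤ t i) (hn : n = ∑ i, t i)
    (x : (Σ i, Fin (t i)) → ℝ)
    (hx : x ∈ Module.End.eigenspace
      (Matrix.toLin' (distLapMatrix (SimpleGraph.completeMultipartiteGraph fun i => Fin (t i))))
        ((n:ℝ) + 1)) :
    x = 0 := by
  rw [eig_ns_iff hk ht hn 1 one_pos] at hx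
  obtain ⟨h0, hP⟩ := hx
  funext v
  rw [Pi.zero_apply]
  by_cases hv : (t v.1 : ℝ) = 1
  · have h1 : t v.1 = 1 := by exact_mod_cast hv
    have hall : ∀ b : Fin (t v.1), (⟨v.1, b⟩ : Σ i, Fin (t i)) = v := by
      intro b
      have hb : b = v.2 := by
        have hb1 : (b : ℕ) < 1 := h1 ▸ b.2
        have hb2 : ((v.2 : Fin (t v.1)) : ℕ) < 1 := h1 ▸ v.2.2
        have : (b : ℕ) = (v.2 : ℕ) := by omega
        exact Fin.ext this
      rw [hb]
    have hPv := hP v.1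
    rw [Pp, Finset.sum_congr rfl (fun b _ => by rw [hall b])] at hPv
    rw [Finset.sum_const, Finset.card_univ, Fintype.card_fin, h1, one_smul] at hPv
    exact hPv
  · exact h0 v hv

end

/-- The distance Laplacian spectrum of the complete multipartite graph `K_{t_1,…,t_k}` on
`n = t_1 + ⋯ + t_k` vertices: `n + t_i` with multiplicity `t_i - 1` for each part with
`t_i ≥ 2` (parts of equal size combining multiplicities), `n` with multiplicity `k - 1`,
and `0` with multiplicity `1`; and there are no other eigenvalues. -/
theorem stmt_8 (k n : ℕ) (hk : 2 ≤ k) (t : Fin k → ℕ) (ht : ∀ i, 1 ≤ t i)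
    (hn : n = ∑ i, t i)
    (M : Matrix (Σ i, Fin (t i)) (Σ i, Fin (t i)) ℝ)
    (hM : M = distLapMatrix (SimpleGraph.completeMultipartiteGraph (fun i => Fin (t i)))) :
    (∀ s : ℕ, 2 ≤ s →
      eigMult M ((n : ℝ) + s) = ∑ i ∈ Finset.univ.filter (fun i => t i = s), (t i - 1)) ∧
    eigMult M (n : ℝ) = k - 1 ∧
    eigMult M 0 = 1 ∧
    (∀ μ : ℝ, IsEigenvalue M μ →
      μ = 0 ∨ μ = (n : ℝ) ∨ ∃ i, 2 ≤ t i ∧ μ = (n : ℝ) + (t i : ℝ)) := by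
  subst hM
  refine ⟨fun s hs => eigMult_ns hk ht hn s hs, eigMult_n hk ht hn, eigMult_zero hk ht hn, ?_⟩
  intro μ hμ
  by_contra hcon
  push_neg at hcon
  obtain ⟨hμ0, hμn, hμi⟩ := hcon
  have hμ' : Module.End.HasEigenvalue
      (Matrix.toLin' (distLapMatrix (SimpleGraph.completeMultipartiteGraph fun i => Fin (t i)))) μ := hμ
  obtain ⟨x, hx⟩ := hμ'.exists_hasEigenvector
  have hx0 : x ≠ 0 := hx.2
  by_cases hcase : ∃ i : Fin k, μ = (n:ℝ) + t i
  · obtain ⟨i, hi⟩ := hcase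
    by_cases h2i : 2 ≤ t i
    · exact hμi i h2i hi
    · have h1 : t i = 1 := by have := ht i; omega
      have hμ1 : μ = (n:ℝ) + 1 := by rw [hi, h1]; norm_num
      have hmem := hx.1
      rw [hμ1] at hmem
      exact hx0 (eig_n1 hk ht hn x hmem)
  · push_neg at hcase
    exact hx0 (eig_other hk ht hn μ hμ0 hμn hcase x hx.1)
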